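/- There is no function u : ℝ³ → ℝ with 0 ≤ u ≤ 1, u(0) = 1, that is twice continuously differentiable and satisfies Δu = u⁵ on all of ℝ³ (where Δ is the Euclidean Laplacian). -/

import Mathlib

/-- Euclidean Laplacian on ℝ³: sum of second partial derivatives. -/
noncomputable def eucLap (u : (Fin 3 → ℝ) → ℝ) (y : Fin 3 → ℝ) : ℝ :=
  ∑ i : Fin 3, fderiv ℝ (fun z => fderiv ℝ u z (Pi.single i 1)) y (Pi.single i 1)


/-- derivative of g along a line through 0 with direction v -/
lemma derivA (g : (Fin 3 → ℝ) → ℝ) (hg : Differentiable ℝ g) (v : Fin 3 → ℝ) (t : ℝ) :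
    deriv (fun s => g (s • v)) t = fderiv ℝ g (t • v) v := by
  have hL : HasDerivAt (fun s : ℝ => s • v) v t := by
    simpa using (hasDerivAt_id t).smul_const v
  exact ((hg (t • v)).hasFDerivAt.comp_hasDerivAt t hL).deriv

/-- second derivative at a global max of a C² function is ≤ 0 -/
lemma lemB (f : ℝ → ℝ) (hf : ContDiff ℝ 2 f) (hmax : ∀ t, f t ≤ f 0) :
    deriv (deriv f) 0 ≤ 0 := by
  by_contra hpos
  push_neg at hpos
  have hf1 : Differentiable ℝ f := hf.differentiable two_ne_zero
  have hfd : ContDiff ℝ 1 (deriv f) := by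
    have hf2 : ContDiff ℝ ((1:WithTop ℕ∞)+1) f := by
      rw [show ((1:WithTop ℕ∞)+1) = 2 from rfl]; exact hf
    exact (contDiff_succ_iff_deriv.mp hf2).2.2
  have hd : Differentiable ℝ (deriv f) := hfd.differentiable one_ne_zero
  have hmax0 : IsLocalMax f 0 := Filter.Eventually.of_forall hmax
  have h0 : deriv f 0 = 0 := hmax0.deriv_eq_zero
  have hda : HasDerivAt (deriv f) (deriv (deriv f) 0) 0 := (hd 0).hasDerivAt
  have hslope := hasDerivAt_iff_tendsto_slope.mp hda
  have hev : ∀ᶠ t in nhdsWithin 0 {(0:ℝ)}ᶜ, 0 < slope (deriv f) 0 t :=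
    hslope.eventually (eventually_gt_nhds hpos)
  rw [eventually_nhdsWithin_iff] at hev
  rw [Metric.eventually_nhds_iff] at hev
  obtain ⟨ε, hε, hball⟩ := hev
  have hderiv_pos : ∀ x ∈ Set.Ioo (0:ℝ) (ε/2), 0 < deriv f x := by
    intro x hx
    have hx0 : x ≠ 0 := ne_of_gt hx.1
    have hdist : dist x 0 < ε := by
      rw [Real.dist_eq, sub_zero, abs_of_pos hx.1]; linarith [hx.2]
    have := hball hdist hx0
    rw [slope_def_field, h0] at this
    have hxpos := hx.1
    rw [sub_zero, sub_zero, div_pos_iff] at this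
    rcases this with ⟨h1, _⟩ | ⟨_, h2⟩
    · exact h1
    · linarith
  have hmono : StrictMonoOn f (Set.Icc 0 (ε/2)) := by
    apply StrictMonoOn.mono (strictMonoOn_of_deriv_pos (convex_Icc 0 (ε/2))
      (hf1.continuous.continuousOn) ?_) (le_refl _)
    intro x hx
    rw [interior_Icc] at hx
    exact hderiv_pos x hx
  have h1 : f 0 < f (ε/2) := hmono ⟨le_refl 0, by linarith⟩ ⟨by linarith, le_refl _⟩ (by linarith)
  exact absurd (hmax (ε/2)) (not_le.mpr h1)

/-- There is no C² function `u : ℝ³ → ℝ` with `0 ≤ u ≤ 1`, `u 0 = 1`,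
satisfying `Δu = u⁵` on all of ℝ³. -/
theorem stmt_0 :
    ¬ ∃ u : (Fin 3 → ℝ) → ℝ,
      ContDiff ℝ 2 u ∧
      (∀ y, 0 ≤ u y ∧ u y ≤ 1) ∧
      u 0 = 1 ∧
      (∀ y, eucLap u y = (u y) ^ 5) := by
  rintro ⟨u, hu, hb, h0, heq⟩
  have hud : Differentiable ℝ u := hu.differentiable two_ne_zero
  have key : ∀ i : Fin 3,
      fderiv ℝ (fun z => fderiv ℝ u z (Pi.single i 1)) 0 (Pi.single i 1) ≤ 0 := by
    intro i
    set v : Fin 3 → ℝ := Pi.single i 1 with hv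
    set f : ℝ → ℝ := fun t => u (t • v) with hfdef
    have hline : ContDiff ℝ 2 (fun t : ℝ => t • v) := contDiff_id.smul contDiff_const
    have hfC2 : ContDiff ℝ 2 f := hu.comp hline
    have hmax : ∀ t, f t ≤ f 0 := by
      intro t
      simp only [hfdef, zero_smul, h0]
      exact (hb (t • v)).2
    have hw : ContDiff ℝ 1 (fun z => fderiv ℝ u z v) := by
      exact (hu.fderiv_right (m := 1) (by norm_num)).clm_apply
        (contDiff_const : ContDiff ℝ 1 (fun _ : Fin 3 → ℝ => v))
    have hwd : Differentiable ℝ (fun z => fderiv ℝ u z v) := hw.differentiable one_ne_zero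
    have hd1 : deriv f = fun t => fderiv ℝ u (t • v) v := by
      funext t; exact derivA u hud v t
    have hd2 : deriv (deriv f) 0 = fderiv ℝ (fun z => fderiv ℝ u z v) 0 v := by
      rw [hd1]
      simpa using derivA (fun z => fderiv ℝ u z v) hwd v 0
    have := lemB f hfC2 hmax
    rw [hd2] at this
    exact this
  have hsum : eucLap u 0 ≤ 0 := Finset.sum_nonpos (fun i _ => key i)
  have h1 : eucLap u 0 = 1 := by rw [heq 0, h0]; norm_num
  linarith
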